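/- For every λ ∈ a and every x ∈ a, G_λ(x) ≤ G_0(x) · e^{max_{w∈W} (wλ, x)}, where G_0 is the Opdam function with parameter 0. -/

import Mathlib

open scoped BigOperators RealInnerProductSpace Classical

noncomputable section

variable {E : Type*} [NormedAddCommGroup E] [InnerProductSpace ℝ E] [FiniteDimensional ℝ E]

/-- The coroot `α∨ = 2α/|α|²`. -/
def coroot (α : E) : E := (2 / ⟪α, α⟫) • α

/-- The orthogonal reflection `r_α x = x - (α∨, x) α`. -/
def rRefl (α : E) (x : E) : E := x - ⟪coroot α, x⟫ • α

/-- Data of an integral root system with positive subsystem and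
a Weyl-invariant positive multiplicity function. -/
structure HOData (E : Type*) [NormedAddCommGroup E] [InnerProductSpace ℝ E] : Type _ where
  R : Finset E
  Rpos : Finset E
  k : E → ℝ
  k_pos : ∀ α ∈ R, 0 < k α
  root_ne_zero : ∀ α ∈ R, α ≠ 0
  pos_subset : Rpos ⊆ R
  pos_char : ∃ u : E, ∀ α ∈ R, (α ∈ Rpos ↔ 0 < ⟪α, u⟫)
  pos_or_neg : ∀ α ∈ R, α ∈ Rpos ∨ -α ∈ Rpos
  neg_mem : ∀ α ∈ R, -α ∈ R
  integral : ∀ α ∈ R, ∀ β ∈ R, ∃ n : ℤ, ⟪coroot α, β⟫ = (n : ℝ)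
  refl_mem : ∀ α ∈ R, ∀ β ∈ R, rRefl α β ∈ R
  k_inv : ∀ α ∈ R, ∀ β ∈ R, k (rRefl α β) = k β

/-- The Weyl group: the subgroup of linear isometries generated by the root reflections. -/
def weylGroup (D : HOData E) : Subgroup (E ≃ₗᵢ[ℝ] E) :=
  Subgroup.closure {w : E ≃ₗᵢ[ℝ] E | ∃ α ∈ D.R, ∀ x, w x = rRefl α x}

/-- `ρ = (1/2) Σ_{α ∈ R⁺} k_α α`. -/
def rhoHO (D : HOData E) : E := (2:ℝ)⁻¹ • ∑ α ∈ D.Rpos, D.k α • α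

/-- Regular points. -/
def HORegular (D : HOData E) (x : E) : Prop := ∀ α ∈ D.R, ⟪α, x⟫ ≠ 0

/-- The (open) positive Weyl chamber. -/
def posChamber (D : HOData E) : Set E := {x | ∀ α ∈ D.Rpos, 0 < ⟪α, x⟫}

/-- The positive indivisible roots `R₀⁺`. -/
def Rpos0 (D : HOData E) : Finset E := D.Rpos.filter (fun α => (2:ℝ)⁻¹ • α ∉ D.R)

/-- The Opdam function `G_λ` for a real parameter `λ`: an analytic function,
normalized at `0`, satisfying the Cherednik differential-difference system. -/
def IsOpdamR (D : HOData E) (lam : E) (G : E → ℝ) : Prop :=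
  AnalyticOnNhd ℝ G Set.univ ∧ G 0 = 1 ∧
  ∀ ξ x, HORegular D x →
    fderiv ℝ G x ξ =
      (∑ α ∈ D.Rpos, D.k α * ⟪α, ξ⟫ / (1 - Real.exp (-⟪α, x⟫)) * (G (rRefl α x) - G x))
      + ⟪rhoHO D + lam, ξ⟫ * G x

/-- The Opdam function `G_λ` for a complex parameter `λ = l1 + i l2 ∈ h`. -/
def IsOpdamC (D : HOData E) (l1 l2 : E) (G : E → ℂ) : Prop :=
  AnalyticOnNhd ℝ G Set.univ ∧ G 0 = 1 ∧
  ∀ ξ x, HORegular D x →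
    fderiv ℝ G x ξ =
      (∑ α ∈ D.Rpos, ((D.k α * ⟪α, ξ⟫ / (1 - Real.exp (-⟪α, x⟫)) : ℝ) : ℂ)
          * (G (rRefl α x) - G x))
      + (((⟪rhoHO D + l1, ξ⟫ : ℝ) : ℂ) + Complex.I * ((⟪l2, ξ⟫ : ℝ) : ℂ)) * G x

/-- The symmetrization `F(x) = |W|⁻¹ Σ_{w ∈ W} G(w x)` (real valued case). -/
def Fsym (D : HOData E) [Fintype (weylGroup D)] (G : E → ℝ) (x : E) : ℝ :=
  (Fintype.card (weylGroup D) : ℝ)⁻¹ * ∑ w : weylGroup D, G (w.1 x)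

/-- The symmetrization `F(x) = |W|⁻¹ Σ_{w ∈ W} G(w x)` (complex valued case). -/
def FsymC (D : HOData E) [Fintype (weylGroup D)] (G : E → ℂ) (x : E) : ℂ :=
  (Fintype.card (weylGroup D) : ℂ)⁻¹ * ∑ w : weylGroup D, G (w.1 x)

/-- `max_{w ∈ W} (w λ, x)`. -/
def maxW (D : HOData E) [Fintype (weylGroup D)] (lam x : E) : ℝ :=
  ⨆ w : weylGroup D, ⟪w.1 lam, x⟫


section Gron
open Set Filter Topology

lemma master_sup {ι : Type*} [Fintype ι] [Nonempty ι] (v v' : ι → ℝ → ℝ) (K : ℝ)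
    (hc : ∀ i, ContinuousOn (v i) (Icc 0 1))
    (hd : ∀ i, ∀ t, 0 < t → t < 1 → HasDerivAt (v i) (v' i t) t)
    (hineq : ∀ t, 0 < t → t < 1 → ∀ i, (∀ j, v j t ≤ v i t) → v' i t ≤ K * v i t) :
    ∀ t ∈ Icc (0:ℝ) 1,
      (Finset.univ.sup' Finset.univ_nonempty (fun i => v i t))
        ≤ (Finset.univ.sup' Finset.univ_nonempty (fun i => v i 0)) * Real.exp (K * t) := by
  set F : ℝ → ℝ := fun t => Finset.univ.sup' Finset.univ_nonempty (fun i => v i t) with hF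
  have hFc : ContinuousOn F (Icc 0 1) :=
    ContinuousOn.finset_sup'_apply Finset.univ_nonempty (fun i _ => hc i)
  have key : ∀ s, 0 < s → s < 1 → ∀ t ∈ Icc s 1, F t ≤ F s * Real.exp (K * (t - s)) := by
    intro s hs hs1 t ht
    have h01 : Icc s 1 ⊆ Icc (0:ℝ) 1 := Icc_subset_Icc hs.le le_rfl
    have := le_gronwallBound_of_liminf_deriv_right_le (f := F) (f' := fun t => K * F t)
      (δ := F s) (K := K) (ε := 0) (a := s) (b := 1) (hFc.mono h01)
      ?_ le_rfl ?_ t ht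
    · rwa [gronwallBound_ε0] at this
    · intro x hx r hr
      have hx0 : 0 < x := lt_of_lt_of_le hs hx.1
      have hx1 : x < 1 := hx.2
      have hev : ∀ᶠ z in 𝓝[>] x, (z - x)⁻¹ * (F z - F x) < r := by
        have hall : ∀ j, ∀ᶠ z in 𝓝[>] x, v j z - F x < r * (z - x) := by
          intro j
          by_cases hjmax : v j x = F x
          · have hdj : v' j x ≤ K * v j x := by
              apply hineq x hx0 hx1 j
              intro k
              rw [hjmax]
              exact Finset.le_sup' (fun i => v i x) (Finset.mem_univ k)
            have hlt : v' j x < r := lt_of_le_of_lt (by rwa [hjmax] at hdj) hr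
            have hslope : Tendsto (slope (v j) x) (𝓝[>] x) (𝓝 (v' j x)) :=
              ((hasDerivAt_iff_tendsto_slope).1 (hd j x hx0 hx1)).mono_left
                (nhdsWithin_mono _ (fun z hz => ne_of_gt hz))
            filter_upwards [hslope.eventually_lt_const hlt, self_mem_nhdsWithin] with z hz
              (hzx : x < z)
            rw [slope_def_field, div_lt_iff₀ (by linarith)] at hz
            rw [hjmax] at hz
            linarith
          · have hjlt : v j x < F x :=
              lt_of_le_of_ne (Finset.le_sup' (fun i => v i x) (Finset.mem_univ j)) hjmax
            have hcj : Tendsto (fun z => v j z) (𝓝[>] x) (𝓝 (v j x)) :=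
              ((hd j x hx0 hx1).continuousAt.tendsto).mono_left nhdsWithin_le_nhds
            have h1 : ∀ᶠ z in 𝓝[>] x, v j z < (v j x + F x) / 2 := by
              apply hcj.eventually_lt_const; linarith
            have h2 : Tendsto (fun z => r * (z - x)) (𝓝[>] x) (𝓝 0) := by
              have : Tendsto (fun z : ℝ => r * (z - x)) (𝓝 x) (𝓝 (r * (x - x))) :=
                (tendsto_id.sub tendsto_const_nhds).const_mul r
              simpa using this.mono_left nhdsWithin_le_nhds
            have h3 : ∀ᶠ z in 𝓝[>] x, (v j x + F x) / 2 - F x < r * (z - x) := by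
              apply h2.eventually_const_lt; linarith
            filter_upwards [h1, h3] with z hz1 hz3; linarith
        filter_upwards [(eventually_all (ι := ι)).2 hall, self_mem_nhdsWithin] with z hz
          (hzx : x < z)
        obtain ⟨j, _, hj⟩ := Finset.exists_mem_eq_sup' Finset.univ_nonempty (fun i => v i z)
        have hFzx : F z - F x < r * (z - x) := by
          have := hz j
          have hFz : F z = v j z := hj
          linarith [hz j, hFz ▸ (le_refl (F z))]
        have hzx' : (0:ℝ) < z - x := by linarith
        calc (z - x)⁻¹ * (F z - F x) < (z - x)⁻¹ * (r * (z - x)) := by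
              apply mul_lt_mul_of_pos_left hFzx (by positivity)
          _ = r := by field_simp
      exact hev.frequently
    · intro x _
      simp only [add_zero]; exact le_rfl
  intro t ht
  rcases eq_or_lt_of_le ht.1 with h0 | h0
  · rw [← h0]; simp
  · have hall : ∀ s ∈ Ioo (0:ℝ) t, F t ≤ F s * Real.exp (K * (t - s)) := by
      intro s hs
      exact key s hs.1 (lt_of_lt_of_le hs.2 ht.2) t ⟨hs.2.le, ht.2⟩
    have hne : (𝓝[Ioo (0:ℝ) t] 0).NeBot := by
      rw [← mem_closure_iff_nhdsWithin_neBot, closure_Ioo (ne_of_lt h0)]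
      exact ⟨le_rfl, h0.le⟩
    have hsub : Ioo (0:ℝ) t ⊆ Icc 0 1 := fun z hz => ⟨hz.1.le, le_trans hz.2.le ht.2⟩
    have hFt : Tendsto F (𝓝[Ioo (0:ℝ) t] 0) (𝓝 (F 0)) :=
      (hFc 0 ⟨le_rfl, zero_le_one⟩).tendsto.mono_left (nhdsWithin_mono _ hsub)
    have hexp : Tendsto (fun s => F s * Real.exp (K * (t - s))) (𝓝[Ioo (0:ℝ) t] 0)
        (𝓝 (F 0 * Real.exp (K * t))) := by
      have h2 : Tendsto (fun s : ℝ => Real.exp (K * (t - s))) (𝓝[Ioo (0:ℝ) t] 0)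
          (𝓝 (Real.exp (K * t))) := by
        have hcont : Continuous (fun s : ℝ => Real.exp (K * (t - s))) := by continuity
        simpa using (hcont.tendsto 0).mono_left nhdsWithin_le_nhds
      exact hFt.mul h2
    exact ge_of_tendsto hexp (eventually_mem_nhdsWithin.mono hall)

end Gron
-- geometry layer, to be appended after defs
section Geometry

open Set Filter Topology

variable {E : Type*} [NormedAddCommGroup E] [InnerProductSpace ℝ E] [FiniteDimensional ℝ E]

lemma rRefl_smul' (α : E) (t : ℝ) (x : E) : rRefl α (t • x) = t • rRefl α x := by
  simp only [rRefl, inner_smul_right, smul_sub, smul_smul, mul_comm]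

/-- The reflection `r_α` as a linear isometry equivalence. -/
def reflIso (α : E) : E ≃ₗᵢ[ℝ] E := Submodule.reflection ((ℝ ∙ α)ᗮ)

lemma reflIso_apply (α : E) (x : E) : reflIso α x = rRefl α x := by
  rw [reflIso, Submodule.reflection_orthogonal_apply, Submodule.reflection_singleton_apply,
    rRefl, coroot, real_inner_smul_left]
  have h : ⟪α, α⟫ = ‖α‖ ^ 2 := real_inner_self_eq_norm_sq α
  rw [h, neg_sub, two_smul, ← add_smul]
  congr 2
  ring_nf
  norm_cast

lemma reflIso_mem (D : HOData E) {α : E} (hα : α ∈ D.R) : reflIso α ∈ weylGroup D :=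
  Subgroup.subset_closure ⟨α, hα, fun x => reflIso_apply α x⟩

lemma weyl_maps_R (D : HOData E) {w : E ≃ₗᵢ[ℝ] E} (hw : w ∈ weylGroup D) :
    ∀ α ∈ D.R, w α ∈ D.R := by
  refine Subgroup.closure_induction (k := {w : E ≃ₗᵢ[ℝ] E | ∃ α ∈ D.R, ∀ x, w x = rRefl α x})
    (p := fun g _ => ∀ α ∈ D.R, g α ∈ D.R) ?_ ?_ ?_ ?_ hw
  · rintro g ⟨β, hβ, hg⟩ α hα
    rw [hg]
    exact D.refl_mem β hβ α hα
  · intro α hα; simpa using hα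
  · intro g h _ _ hg hh α hα
    have : (g * h) α = g (h α) := rfl
    rw [this]
    exact hg _ (hh α hα)
  · intro g _ hg α hα
    have himg : D.R.image (fun β => g β) = D.R := by
      apply Finset.eq_of_subset_of_card_le
      · intro b hb
        obtain ⟨a, ha, rfl⟩ := Finset.mem_image.1 hb
        exact hg a ha
      · rw [Finset.card_image_of_injective _ g.injective]
    rw [← himg] at hα
    obtain ⟨β, hβ, hβα⟩ := Finset.mem_image.1 hα
    have : g⁻¹ α = β := by rw [← hβα]; exact g.symm_apply_apply β
    rw [this]
    exact hβ

lemma inner_symm_left (w : E ≃ₗᵢ[ℝ] E) (a x : E) : ⟪a, w x⟫ = ⟪w.symm a, x⟫ := by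
  conv_lhs => rw [← w.apply_symm_apply a]
  exact w.inner_map_map (w.symm a) x

lemma regular_w_smul (D : HOData E) {x : E} (hx : HORegular D x) {w : E ≃ₗᵢ[ℝ] E}
    (hw : w ∈ weylGroup D) {t : ℝ} (ht : t ≠ 0) : HORegular D (t • w x) := by
  intro α hα
  rw [real_inner_smul_right, inner_symm_left]
  have hwinv : w⁻¹ ∈ weylGroup D := inv_mem hw
  have : w.symm α ∈ D.R := weyl_maps_R D hwinv α hα
  exact mul_ne_zero ht (hx _ this)

lemma coeff_nonneg {k s t : ℝ} (hk : 0 ≤ k) (ht : 0 < t) :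
    0 ≤ k * s / (1 - Real.exp (-(t * s))) := by
  rcases lt_trichotomy s 0 with hs | hs | hs
  · apply div_nonneg_of_nonpos (mul_nonpos_of_nonneg_of_nonpos hk hs.le)
    have : 1 < Real.exp (-(t * s)) := by
      rw [Real.one_lt_exp_iff]; nlinarith
    linarith
  · simp [hs]
  · apply div_nonneg (mul_nonneg hk hs.le)
    have : Real.exp (-(t * s)) < 1 := by
      rw [Real.exp_lt_one_iff]; nlinarith
    linarith

lemma maxW_eq_sup' (D : HOData E) [Fintype (weylGroup D)] (lam x : E) :
    maxW D lam x = Finset.univ.sup' (⟨1, Finset.mem_univ 1⟩ :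
      (Finset.univ : Finset (weylGroup D)).Nonempty) (fun w : weylGroup D => ⟪w.1 lam, x⟫) := by
  haveI : Nonempty (weylGroup D) := ⟨1⟩
  unfold maxW
  apply le_antisymm
  · exact ciSup_le (fun w => Finset.le_sup' (fun w : weylGroup D => ⟪w.1 lam, x⟫)
      (Finset.mem_univ w))
  · apply Finset.sup'_le
    intro w _
    exact le_ciSup (f := fun v : weylGroup D => ⟪v.1 lam, x⟫)
      (Set.Finite.bddAbove (Set.finite_range _)) w

lemma le_maxW (D : HOData E) [Fintype (weylGroup D)] (lam x : E) (w : weylGroup D) :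
    ⟪lam, w.1 x⟫ ≤ maxW D lam x := by
  haveI : Nonempty (weylGroup D) := ⟨1⟩
  have h1 : ⟪lam, w.1 x⟫ = ⟪(w⁻¹).1 lam, x⟫ := by
    rw [inner_symm_left]; rfl
  rw [h1]
  unfold maxW
  exact le_ciSup (f := fun v : weylGroup D => ⟪v.1 lam, x⟫)
    (Set.Finite.bddAbove (Set.finite_range _)) w⁻¹

lemma maxW_continuous (D : HOData E) [Fintype (weylGroup D)] (lam : E) :
    Continuous (fun x => maxW D lam x) := by
  haveI : Nonempty (weylGroup D) := ⟨1⟩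
  have heq : (fun x => maxW D lam x) = fun x => Finset.univ.sup' (⟨1, Finset.mem_univ 1⟩ :
      (Finset.univ : Finset (weylGroup D)).Nonempty) (fun w : weylGroup D => ⟪w.1 lam, x⟫) := by
    funext x; exact maxW_eq_sup' D lam x
  rw [heq, continuous_iff_continuousAt]
  intro x
  exact ContinuousAt.finset_sup'_apply _
    (fun w _ => (continuous_const.inner continuous_id).continuousAt)

end Geometry

section MainArg

open Set Filter Topology

variable {E : Type*} [NormedAddCommGroup E] [InnerProductSpace ℝ E] [FiniteDimensional ℝ E]

lemma curve_hasDerivAt {G : E → ℝ} (hd : ∀ p, DifferentiableAt ℝ G p) (y : E) (t : ℝ) :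
    HasDerivAt (fun s : ℝ => G (s • y)) (fderiv ℝ G (t • y) y) t := by
  have h1 : HasDerivAt (fun s : ℝ => s • y) y t := by
    simpa using (hasDerivAt_id t).smul_const y
  exact (hd (t • y)).hasFDerivAt.comp_hasDerivAt t h1

lemma opdam_nonneg_ray (D : HOData E) [Fintype (weylGroup D)] (lam : E) (G : E → ℝ)
    (hG : IsOpdamR D lam G) {x : E} (hx : HORegular D x) :
    ∀ w : weylGroup D, ∀ t ∈ Icc (0:ℝ) 1, 0 ≤ G (t • w.1 x) := by
  haveI : Nonempty (weylGroup D) := ⟨1⟩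
  obtain ⟨hGan, hG1, hGeq⟩ := hG
  have hdiff : ∀ p, DifferentiableAt ℝ G p := fun p => (hGan p (Set.mem_univ p)).differentiableAt
  have hGc : Continuous G := by
    rw [continuous_iff_continuousAt]; exact fun p => (hdiff p).continuousAt
  have hmaster := master_sup
    (v := fun (i : Option (weylGroup D)) t => i.elim 0 (fun w => -G (t • w.1 x)))
    (v' := fun (i : Option (weylGroup D)) t =>
      i.elim 0 (fun w => -(fderiv ℝ G (t • w.1 x) (w.1 x))))
    (K := ‖rhoHO D + lam‖ * ‖x‖)
    (by
      intro i
      cases i with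
      | none => exact continuousOn_const
      | some w =>
        exact ((hGc.comp (continuous_id.smul continuous_const)).neg).continuousOn)
    (by
      intro i t _ _
      cases i with
      | none => exact hasDerivAt_const t 0
      | some w => exact (curve_hasDerivAt hdiff (w.1 x) t).neg)
    (by
      intro t ht0 ht1 i hmax
      cases i with
      | none =>
        simp only [Option.elim]
        positivity
      | some w =>
        simp only [Option.elim]
        have hreg : HORegular D (t • w.1 x) := regular_w_smul D hx w.2 (ne_of_gt ht0)
        have heq := hGeq (w.1 x) (t • w.1 x) hreg
        rw [heq]
        have hGp0 : 0 ≤ -G (t • w.1 x) := by simpa using hmax none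
        have hsum : 0 ≤ ∑ α ∈ D.Rpos,
            D.k α * ⟪α, w.1 x⟫ / (1 - Real.exp (-⟪α, t • w.1 x⟫)) *
              (G (rRefl α (t • w.1 x)) - G (t • w.1 x)) := by
          apply Finset.sum_nonneg
          intro α hα
          have hαR := D.pos_subset hα
          have hc : 0 ≤ D.k α * ⟪α, w.1 x⟫ / (1 - Real.exp (-⟪α, t • w.1 x⟫)) := by
            rw [real_inner_smul_right]
            exact coeff_nonneg (D.k_pos α hαR).le ht0
          apply mul_nonneg hc
          rw [sub_nonneg]
          have hr1 : rRefl α (t • w.1 x)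
              = t • ((⟨reflIso α, reflIso_mem D hαR⟩ * w : weylGroup D).1 x) := by
            rw [rRefl_smul']
            congr 1
            rw [← reflIso_apply]
            rfl
          rw [hr1]
          have := hmax (some (⟨reflIso α, reflIso_mem D hαR⟩ * w))
          simp only [Option.elim] at this
          linarith
        have hdK : ⟪rhoHO D + lam, w.1 x⟫ ≤ ‖rhoHO D + lam‖ * ‖x‖ := by
          calc ⟪rhoHO D + lam, w.1 x⟫ ≤ ‖rhoHO D + lam‖ * ‖w.1 x‖ := real_inner_le_norm _ _
            _ = ‖rhoHO D + lam‖ * ‖x‖ := by rw [w.1.norm_map]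
        have hmul : ⟪rhoHO D + lam, w.1 x⟫ * (-G (t • w.1 x))
            ≤ ‖rhoHO D + lam‖ * ‖x‖ * (-G (t • w.1 x)) :=
          mul_le_mul_of_nonneg_right hdK hGp0
        nlinarith [hsum, hmul])
  -- extract conclusion
  have hF0 : (Finset.univ.sup' Finset.univ_nonempty
      (fun i : Option (weylGroup D) => i.elim 0 (fun w => -G ((0:ℝ) • w.1 x)))) ≤ 0 := by
    apply Finset.sup'_le
    intro i _
    cases i with
    | none => exact le_rfl
    | some w => simp [Option.elim, hG1]
  intro w t ht
  have h1 := hmaster t ht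
  have h2 : (Finset.univ.sup' Finset.univ_nonempty
      (fun i : Option (weylGroup D) => i.elim 0 (fun w => -G ((0:ℝ) • w.1 x))))
        * Real.exp (‖rhoHO D + lam‖ * ‖x‖ * t) ≤ 0 := by
    have := mul_le_mul_of_nonneg_right hF0 (Real.exp_nonneg (‖rhoHO D + lam‖ * ‖x‖ * t))
    simpa using this
  have h3 := le_trans (Finset.le_sup'
    (fun i : Option (weylGroup D) => i.elim 0 (fun w => -G (t • w.1 x)))
    (Finset.mem_univ (some w))) (le_trans h1 h2)
  simp only [Option.elim] at h3
  linarith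

lemma opdam_main_regular (D : HOData E) [Fintype (weylGroup D)] (lam : E) (G Gzero : E → ℝ)
    (hG : IsOpdamR D lam G) (hG0 : IsOpdamR D 0 Gzero) {x : E} (hx : HORegular D x) :
    G x ≤ Gzero x * Real.exp (maxW D lam x) := by
  haveI : Nonempty (weylGroup D) := ⟨1⟩
  have hpos := opdam_nonneg_ray D lam G hG hx
  obtain ⟨hGan, hG1, hGeq⟩ := hG
  obtain ⟨hG0an, hG01, hG0eq⟩ := hG0
  have hdiff : ∀ p, DifferentiableAt ℝ G p := fun p => (hGan p (Set.mem_univ p)).differentiableAt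
  have hdiff0 : ∀ p, DifferentiableAt ℝ Gzero p :=
    fun p => (hG0an p (Set.mem_univ p)).differentiableAt
  have hGc : Continuous G := by
    rw [continuous_iff_continuousAt]; exact fun p => (hdiff p).continuousAt
  have hG0c : Continuous Gzero := by
    rw [continuous_iff_continuousAt]; exact fun p => (hdiff0 p).continuousAt
  set m : ℝ := maxW D lam x with hm
  set K : ℝ := ‖rhoHO D‖ * ‖x‖ + |m| with hK
  have hKnn : 0 ≤ K := by positivity
  have hmaster := master_sup
    (v := fun (i : Option (weylGroup D)) t =>
      i.elim 0 (fun w => G (t • w.1 x) - Gzero (t • w.1 x) * Real.exp (t * m)))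
    (v' := fun (i : Option (weylGroup D)) t =>
      i.elim 0 (fun w => fderiv ℝ G (t • w.1 x) (w.1 x) -
        (fderiv ℝ Gzero (t • w.1 x) (w.1 x) * Real.exp (t * m) +
          Gzero (t • w.1 x) * (Real.exp (t * m) * m))))
    (K := K)
    (by
      intro i
      cases i with
      | none => exact continuousOn_const
      | some w =>
        apply ContinuousOn.sub
        · exact (hGc.comp (continuous_id.smul continuous_const)).continuousOn
        · apply ContinuousOn.mul
          · exact (hG0c.comp (continuous_id.smul continuous_const)).continuousOn
          · exact (Real.continuous_exp.comp (continuous_id.mul continuous_const)).continuousOn)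
    (by
      intro i t _ _
      cases i with
      | none => exact hasDerivAt_const t 0
      | some w =>
        have h1 := curve_hasDerivAt hdiff (w.1 x) t
        have h2 := curve_hasDerivAt hdiff0 (w.1 x) t
        have h3 : HasDerivAt (fun s : ℝ => Real.exp (s * m)) (Real.exp (t * m) * m) t := by
          have := ((hasDerivAt_id t).mul_const m).exp
          simpa using this
        exact h1.sub (h2.mul h3))
    (by
      intro t ht0 ht1 i hmax
      cases i with
      | none =>
        simp only [Option.elim]
        simpa using mul_nonneg hKnn (le_refl (0:ℝ))
      | some w =>
        simp only [Option.elim]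
        have hreg : HORegular D (t • w.1 x) := regular_w_smul D hx w.2 (ne_of_gt ht0)
        have heqG := hGeq (w.1 x) (t • w.1 x) hreg
        have heq0 := hG0eq (w.1 x) (t • w.1 x) hreg
        rw [heqG, heq0]
        set e : ℝ := Real.exp (t * m) with he
        set Gp : ℝ := G (t • w.1 x) with hGp
        set G0p : ℝ := Gzero (t • w.1 x) with hG0p
        -- sum comparison
        have hA : (∑ α ∈ D.Rpos,
              D.k α * ⟪α, w.1 x⟫ / (1 - Real.exp (-⟪α, t • w.1 x⟫)) *
                (G (rRefl α (t • w.1 x)) - Gp))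
            - e * (∑ α ∈ D.Rpos,
              D.k α * ⟪α, w.1 x⟫ / (1 - Real.exp (-⟪α, t • w.1 x⟫)) *
                (Gzero (rRefl α (t • w.1 x)) - G0p)) ≤ 0 := by
          rw [Finset.mul_sum, ← Finset.sum_sub_distrib]
          apply Finset.sum_nonpos
          intro α hα
          have hαR := D.pos_subset hα
          have hc : 0 ≤ D.k α * ⟪α, w.1 x⟫ / (1 - Real.exp (-⟪α, t • w.1 x⟫)) := by
            rw [real_inner_smul_right]
            exact coeff_nonneg (D.k_pos α hαR).le ht0
          have hr1 : rRefl α (t • w.1 x)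
              = t • ((⟨reflIso α, reflIso_mem D hαR⟩ * w : weylGroup D).1 x) := by
            rw [rRefl_smul']
            congr 1
            rw [← reflIso_apply]
            rfl
          have hmaxσ := hmax (some (⟨reflIso α, reflIso_mem D hαR⟩ * w))
          simp only [Option.elim] at hmaxσ
          rw [hr1]
          have hkey : D.k α * ⟪α, w.1 x⟫ / (1 - Real.exp (-⟪α, t • w.1 x⟫)) *
                (G (t • ((⟨reflIso α, reflIso_mem D hαR⟩ * w : weylGroup D).1 x)) - Gp)
              - e * (D.k α * ⟪α, w.1 x⟫ / (1 - Real.exp (-⟪α, t • w.1 x⟫)) *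
                (Gzero (t • ((⟨reflIso α, reflIso_mem D hαR⟩ * w : weylGroup D).1 x)) - G0p))
              = D.k α * ⟪α, w.1 x⟫ / (1 - Real.exp (-⟪α, t • w.1 x⟫)) *
                ((G (t • ((⟨reflIso α, reflIso_mem D hαR⟩ * w : weylGroup D).1 x))
                  - Gzero (t • ((⟨reflIso α, reflIso_mem D hαR⟩ * w : weylGroup D).1 x)) * e)
                 - (Gp - G0p * e)) := by ring
          rw [hkey]
          exact mul_nonpos_of_nonneg_of_nonpos hc (by linarith)
        have hGpnn : 0 ≤ Gp := hpos w t ⟨ht0.le, ht1.le⟩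
        have hvw : 0 ≤ Gp - G0p * e := by simpa using hmax none
        have hlam : ⟪lam, w.1 x⟫ ≤ m := le_maxW D lam x w
        have hd0 : ⟪rhoHO D, w.1 x⟫ ≤ ‖rhoHO D‖ * ‖x‖ := by
          calc ⟪rhoHO D, w.1 x⟫ ≤ ‖rhoHO D‖ * ‖w.1 x‖ := real_inner_le_norm _ _
            _ = ‖rhoHO D‖ * ‖x‖ := by rw [w.1.norm_map]
        have hsplit : ⟪rhoHO D + lam, w.1 x⟫ = ⟪rhoHO D, w.1 x⟫ + ⟪lam, w.1 x⟫ :=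
          inner_add_left _ _ _
        have hz : ⟪rhoHO D + 0, w.1 x⟫ = ⟪rhoHO D, w.1 x⟫ := by rw [add_zero]
        have hkey2 : ((∑ α ∈ D.Rpos,
              D.k α * ⟪α, w.1 x⟫ / (1 - Real.exp (-⟪α, t • w.1 x⟫)) *
                (G (rRefl α (t • w.1 x)) - Gp)) + ⟪rhoHO D + lam, w.1 x⟫ * Gp)
            - (((∑ α ∈ D.Rpos,
              D.k α * ⟪α, w.1 x⟫ / (1 - Real.exp (-⟪α, t • w.1 x⟫)) *
                (Gzero (rRefl α (t • w.1 x)) - G0p)) + ⟪rhoHO D + 0, w.1 x⟫ * G0p) * e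
              + G0p * (e * m))
            = ((∑ α ∈ D.Rpos,
              D.k α * ⟪α, w.1 x⟫ / (1 - Real.exp (-⟪α, t • w.1 x⟫)) *
                (G (rRefl α (t • w.1 x)) - Gp))
            - e * (∑ α ∈ D.Rpos,
              D.k α * ⟪α, w.1 x⟫ / (1 - Real.exp (-⟪α, t • w.1 x⟫)) *
                (Gzero (rRefl α (t • w.1 x)) - G0p)))
              + (⟪lam, w.1 x⟫ - m) * Gp + (⟪rhoHO D, w.1 x⟫ + m) * (Gp - G0p * e) := by
          rw [hsplit, hz]; ring
        rw [hkey2]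
        have h1 : (⟪lam, w.1 x⟫ - m) * Gp ≤ 0 :=
          mul_nonpos_of_nonpos_of_nonneg (by linarith) hGpnn
        have h2 : (⟪rhoHO D, w.1 x⟫ + m) * (Gp - G0p * e) ≤ K * (Gp - G0p * e) :=
          mul_le_mul_of_nonneg_right (by rw [hK]; linarith [le_abs_self m]) hvw
        have hfin := add_le_add (add_le_add hA h1) h2
        simpa using hfin)
  -- extract
  have hF0 : (Finset.univ.sup' Finset.univ_nonempty
      (fun i : Option (weylGroup D) => i.elim 0
        (fun w => G ((0:ℝ) • w.1 x) - Gzero ((0:ℝ) • w.1 x) * Real.exp ((0:ℝ) * m)))) ≤ 0 := by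
    apply Finset.sup'_le
    intro i _
    cases i with
    | none => exact le_rfl
    | some w => simp [Option.elim, hG1, hG01]
  have h1 := hmaster 1 ⟨zero_le_one, le_rfl⟩
  have h2 : (Finset.univ.sup' Finset.univ_nonempty
      (fun i : Option (weylGroup D) => i.elim 0
        (fun w => G ((0:ℝ) • w.1 x) - Gzero ((0:ℝ) • w.1 x) * Real.exp ((0:ℝ) * m))))
        * Real.exp (K * 1) ≤ 0 := by
    have := mul_le_mul_of_nonneg_right hF0 (Real.exp_nonneg (K * 1))
    simpa using this
  have h3 := le_trans (Finset.le_sup'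
    (fun i : Option (weylGroup D) => i.elim 0
      (fun w => G ((1:ℝ) • w.1 x) - Gzero ((1:ℝ) • w.1 x) * Real.exp ((1:ℝ) * m)))
    (Finset.mem_univ (some 1))) (le_trans h1 h2)
  simp only [Option.elim, one_smul, one_mul, OneMemClass.coe_one,
    LinearIsometryEquiv.coe_one, id_eq] at h3
  linarith

end MainArg

/-- for every `λ ∈ a` and every `x ∈ a`,
`G_λ(x) ≤ G_0(x) · exp (max_{w ∈ W} (wλ, x))`. -/
theorem statement2 (D : HOData E) [Fintype (weylGroup D)] (lam : E) (G Gzero : E → ℝ)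
    (hG : IsOpdamR D lam G) (hG0 : IsOpdamR D 0 Gzero) :
    ∀ x : E, G x ≤ Gzero x * Real.exp (maxW D lam x) := by
  intro x
  obtain ⟨u, hu⟩ := D.pos_char
  have hureg : HORegular D u := by
    intro α hα
    rcases D.pos_or_neg α hα with h | h
    · exact ne_of_gt ((hu α hα).1 h)
    · have h2 := (hu (-α) (D.neg_mem α hα)).1 h
      rw [inner_neg_left] at h2
      intro hc
      rw [hc] at h2
      simp at h2
  set A : Set ℝ := {s | 0 < s ∧ HORegular D (x + s • u)} with hA
  have hclos : (0:ℝ) ∈ closure A := by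
    rw [Metric.mem_closure_iff]
    intro ε hε
    have hinf : (Set.Ioo (0:ℝ) ε).Infinite := Set.Ioo_infinite hε
    have h2 : ((Set.Ioo (0:ℝ) ε) \
        ((D.R.image (fun α => -⟪α, x⟫ / ⟪α, u⟫) : Finset ℝ) : Set ℝ)).Nonempty :=
      (hinf.diff (Finset.finite_toSet _)).nonempty
    obtain ⟨s, hs1, hs2⟩ := h2
    refine ⟨s, ⟨hs1.1, ?_⟩, ?_⟩
    · intro α hα
      rw [inner_add_right, real_inner_smul_right]
      intro hcon
      apply hs2
      refine Finset.mem_coe.2 (Finset.mem_image.2 ⟨α, hα, ?_⟩)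
      have hau : ⟪α, u⟫ ≠ 0 := hureg α hα
      field_simp
      linarith
    · rw [Real.dist_eq, zero_sub, abs_neg, abs_of_pos hs1.1]
      exact hs1.2
  haveI hne : (nhdsWithin (0:ℝ) A).NeBot := mem_closure_iff_nhdsWithin_neBot.1 hclos
  have hline : Continuous (fun s : ℝ => x + s • u) :=
    continuous_const.add (continuous_id.smul continuous_const)
  have hGcont : Continuous G := by
    rw [continuous_iff_continuousAt]
    exact fun p => ((hG.1 p (Set.mem_univ p)).differentiableAt).continuousAt
  have hG0cont : Continuous Gzero := by
    rw [continuous_iff_continuousAt]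
    exact fun p => ((hG0.1 p (Set.mem_univ p)).differentiableAt).continuousAt
  have ht1 : Filter.Tendsto (fun s => G (x + s • u)) (nhdsWithin 0 A) (nhds (G x)) := by
    have h := (hGcont.comp hline).tendsto 0
    simp only [Function.comp, zero_smul, add_zero] at h
    exact h.mono_left nhdsWithin_le_nhds
  have ht2 : Filter.Tendsto (fun s => Gzero (x + s • u) * Real.exp (maxW D lam (x + s • u)))
      (nhdsWithin 0 A) (nhds (Gzero x * Real.exp (maxW D lam x))) := by
    have hc : Continuous (fun s : ℝ => Gzero (x + s • u) * Real.exp (maxW D lam (x + s • u))) :=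
      (hG0cont.comp hline).mul (Real.continuous_exp.comp ((maxW_continuous D lam).comp hline))
    have h := hc.tendsto 0
    simp only [Function.comp, zero_smul, add_zero] at h
    exact h.mono_left nhdsWithin_le_nhds
  have hev : ∀ᶠ s in nhdsWithin 0 A,
      G (x + s • u) ≤ Gzero (x + s • u) * Real.exp (maxW D lam (x + s • u)) := by
    filter_upwards [self_mem_nhdsWithin] with s hs
    exact opdam_main_regular D lam G Gzero hG hG0 hs.2
  exact le_of_tendsto_of_tendsto ht1 ht2 hev
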